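/- arXiv:2603.28230 — 5 statements merged into one kernel-verified Lean document; each statement's English description precedes it below -/
import Mathlib

section
/- Let R = F_2[x^{±1}, y^{±1}] be the Laurent polynomial ring over the field with two elements. For any monomial u = x^a y^b with integers a, b, there do not exist p, q ∈ R satisfying p = y·p̄, q = x·q̄ (where bar denotes the antipode map x ↦ x^{-1}, y ↦ y^{-1}) and (1+x)·p + (1+y)·q = u + x·y·u^{-1}. -/
open AddMonoidAlgebra

abbrev R2 : Type := AddMonoidAlgebra (ZMod 2) (ℤ × ℤ)

noncomputable def mono (a b : ℤ) : R2 := AddMonoidAlgebra.single (a, b) 1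

noncomputable def bar (f : R2) : R2 :=
  AddMonoidAlgebra.domCongr (ZMod 2) (ZMod 2) (AddEquiv.neg (ℤ × ℤ)) f

/-- The group algebra `F₂[(ℤ/2) × (ℤ/2)]`, target of the exponent-reduction map. -/
abbrev S2 : Type := AddMonoidAlgebra (ZMod 2) (ZMod 2 × ZMod 2)

/-- Reduction mod 2 of exponents, as an additive hom `ℤ × ℤ →+ (ℤ/2) × (ℤ/2)`. -/
noncomputable def redHom : (ℤ × ℤ) →+ (ZMod 2 × ZMod 2) :=
  (Int.castAddHom (ZMod 2)).prodMap (Int.castAddHom (ZMod 2))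

/-- The induced ring hom `R2 →+* S2`. -/
noncomputable def Φ : R2 →+* S2 :=
  AddMonoidAlgebra.mapDomainRingHom (ZMod 2) redHom

lemma Φ_apply (f : R2) : Φ f = AddMonoidAlgebra.ofCoeff (Finsupp.mapDomain redHom f.coeff) := rfl

lemma bar_eq (f : R2) : bar f = AddMonoidAlgebra.ofCoeff (Finsupp.mapDomain (fun v : ℤ × ℤ => -v) f.coeff) := by
  rw [bar]
  rw [show ((domCongr (ZMod 2) (ZMod 2) (AddEquiv.neg (ℤ × ℤ))) f)
      = AddMonoidAlgebra.ofCoeff (Finsupp.equivMapDomain (AddEquiv.neg (ℤ × ℤ)).toEquiv f.coeff) from by ext v; simp [Finsupp.equivMapDomain_apply]]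
  rw [Finsupp.equivMapDomain_eq_mapDomain]
  rfl

lemma Φ_bar (f : R2) : Φ (bar f) = Φ f := by
  rw [Φ_apply, Φ_apply, bar_eq, AddMonoidAlgebra.coeff_ofCoeff, ← Finsupp.mapDomain_comp]
  congr 2
  funext v
  show redHom (-v) = redHom v
  rw [map_neg]
  exact (show ∀ g : ZMod 2 × ZMod 2, -g = g by decide) _

lemma Φ_mono (a b : ℤ) :
    Φ (mono a b) = AddMonoidAlgebra.single ((a : ZMod 2), (b : ZMod 2)) 1 := by
  rw [Φ_apply, mono]
  simp [Finsupp.mapDomain_single, redHom, AddMonoidAlgebra.coeff_single]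

lemma S2_add_apply (f g : S2) (x : ZMod 2 × ZMod 2) : (f + g).coeff x = f.coeff x + g.coeff x := rfl

/-- For any monomial `u = x^a y^b`, there exist no `p, q ∈ R` with `p = y·p̄`, `q = x·q̄`
and `(1+x)·p + (1+y)·q = u + x·y·u⁻¹`. -/
theorem no_solution_key_equation (a b : ℤ) :
    ¬ ∃ p q : R2,
      p = mono 0 1 * bar p ∧
      q = mono 1 0 * bar q ∧
      (1 + mono 1 0) * p + (1 + mono 0 1) * q
        = mono a b + mono 1 0 * mono 0 1 * mono (-a) (-b) := by
  rintro ⟨p, q, hp, hq, hE⟩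
  set P : S2 := Φ p with hPdef
  set Q : S2 := Φ q with hQdef
  -- image of the hypotheses under Φ
  have hq' : Q = AddMonoidAlgebra.single ((1 : ZMod 2), (0 : ZMod 2)) 1 * Q := by
    conv_lhs => rw [hQdef, hq]
    rw [map_mul, Φ_bar, Φ_mono]
    norm_num
    rfl
  have hE' : (1 + AddMonoidAlgebra.single ((1 : ZMod 2), (0 : ZMod 2)) (1 : ZMod 2)) * P
      + (1 + AddMonoidAlgebra.single ((0 : ZMod 2), (1 : ZMod 2)) (1 : ZMod 2)) * Q
      = AddMonoidAlgebra.single ((a : ZMod 2), (b : ZMod 2)) 1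
        + AddMonoidAlgebra.single ((1 : ZMod 2), (0 : ZMod 2)) (1 : ZMod 2)
          * AddMonoidAlgebra.single ((0 : ZMod 2), (1 : ZMod 2)) (1 : ZMod 2)
          * AddMonoidAlgebra.single ((a : ZMod 2), (b : ZMod 2)) 1 := by
    have := congrArg Φ hE
    simp only [map_add, map_mul, map_one, Φ_mono, Int.cast_one, Int.cast_zero,
      Int.cast_neg] at this
    rw [show (-(a : ZMod 2), -(b : ZMod 2)) = ((a : ZMod 2), (b : ZMod 2)) from by
      simp [Prod.ext_iff, CharTwo.neg_eq]] at this
    exact this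
  -- coefficient equations
  have hq0 := Finsupp.ext_iff.mp (congrArg AddMonoidAlgebra.coeff hq') ((0 : ZMod 2), (0 : ZMod 2))
  have hq1 := Finsupp.ext_iff.mp (congrArg AddMonoidAlgebra.coeff hq') ((0 : ZMod 2), (1 : ZMod 2))
  have E1 := Finsupp.ext_iff.mp (congrArg AddMonoidAlgebra.coeff hE') ((0 : ZMod 2), (0 : ZMod 2))
  have E2 := Finsupp.ext_iff.mp (congrArg AddMonoidAlgebra.coeff hE') ((1 : ZMod 2), (0 : ZMod 2))
  simp only [add_mul, one_mul, AddMonoidAlgebra.single_mul_single, one_mul,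
    S2_add_apply, AddMonoidAlgebra.coeff_single_mul_apply, AddMonoidAlgebra.coeff_single, Finsupp.single_apply] at hq0 hq1 E1 E2
  rw [show (-((1 : ZMod 2), (0 : ZMod 2)) + ((0 : ZMod 2), (0 : ZMod 2))) = (1, 0) from by decide]
    at hq0 E1
  rw [show (-((1 : ZMod 2), (0 : ZMod 2)) + ((0 : ZMod 2), (1 : ZMod 2))) = (1, 1) from by decide]
    at hq1
  rw [show (-((1 : ZMod 2), (0 : ZMod 2)) + ((1 : ZMod 2), (0 : ZMod 2))) = (0, 0) from by decide,
    show (-((0 : ZMod 2), (1 : ZMod 2)) + ((1 : ZMod 2), (0 : ZMod 2))) = (1, 1) from by decide]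
    at E2
  rw [show (-((0 : ZMod 2), (1 : ZMod 2)) + ((0 : ZMod 2), (0 : ZMod 2))) = (0, 1) from by decide]
    at E1
  rw [show (((1 : ZMod 2), (0 : ZMod 2)) + ((0 : ZMod 2), (1 : ZMod 2))) = (1, 1) from by decide]
    at E1 E2
  generalize (a : ZMod 2) = α at E1 E2
  generalize (b : ZMod 2) = β at E1 E2
  generalize P.coeff ((0 : ZMod 2), (0 : ZMod 2)) = p00 at E1 E2
  generalize P.coeff ((1 : ZMod 2), (0 : ZMod 2)) = p10 at E1 E2
  generalize Q.coeff ((0 : ZMod 2), (0 : ZMod 2)) = q00 at hq0 E1 E2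
  generalize Q.coeff ((0 : ZMod 2), (1 : ZMod 2)) = q01 at hq1 E1 E2
  generalize Q.coeff ((1 : ZMod 2), (0 : ZMod 2)) = q10 at hq0 E1 E2
  generalize Q.coeff ((1 : ZMod 2), (1 : ZMod 2)) = q11 at hq1 E1 E2
  clear_value P Q
  clear hE' hq' hp hq hE hPdef hQdef
  revert hq0 hq1 E1 E2
  revert α β p00 p10 q00 q01 q10 q11
  decide
end

section
/- Let R = F_2[x^{±1}, y^{±1}] with antipode involution f ↦ f̄ determined by x ↦ x^{-1}, y ↦ y^{-1}. Define the F_2-linear functional π on the F_2-subspace V = {f ∈ R : f = x·y·f̄} spanned by the elements E_{m,n} = x^m y^n + x^{1-m} y^{1-n}, by π(Σ α_{m,n} E_{m,n}) = Σ α_{m,n} mod 2 (sum over representatives of pairs {(m,n),(1-m,1-n)}). Then π is well defined, and for every p with p = y·p̄ and every q with q = x·q̄, one has (1+x)p + (1+y)q ∈ V and π((1+x)p + (1+y)q) = 0, while π(x^a y^b + x^{1-a} y^{1-b}) = 1 for all integers a, b. -/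
open AddMonoidAlgebra

/-- `E_{m,n} = x^m y^n + x^{1-m} y^{1-n}`. -/
noncomputable def Emn (m n : ℤ) : R2 := mono m n + mono (1 - m) (1 - n)

/-- The subspace `V = {f ∈ R : f = x·y·f̄}` (as a set). -/
noncomputable def Vset : Set R2 := {f : R2 | f = mono 1 0 * mono 0 1 * bar f}

/- ### Auxiliary lemmas -/

lemma bar_mul' (f g : R2) : bar (f * g) = bar f * bar g :=
  map_mul (AddMonoidAlgebra.domCongr (ZMod 2) (ZMod 2) (AddEquiv.neg (ℤ × ℤ))) f g

lemma bar_add' (f g : R2) : bar (f + g) = bar f + bar g :=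
  map_add (AddMonoidAlgebra.domCongr (ZMod 2) (ZMod 2) (AddEquiv.neg (ℤ × ℤ))) f g

lemma bar_one' : bar 1 = (1 : R2) :=
  map_one (AddMonoidAlgebra.domCongr (ZMod 2) (ZMod 2) (AddEquiv.neg (ℤ × ℤ)))

lemma bar_mono' (a b : ℤ) : bar (mono a b) = mono (-a) (-b) := by
  simp [bar, mono, AddMonoidAlgebra.domCongr_single]

lemma bar_apply' (f : R2) (k : ℤ × ℤ) : (bar f).coeff k = f.coeff (-k) := by
  simp [bar, AddMonoidAlgebra.coeff_domCongr]

lemma mono_mul' (a b c d : ℤ) : mono a b * mono c d = mono (a + c) (b + d) := by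
  simp [mono, AddMonoidAlgebra.single_mul_single]

lemma mono_zero' : mono 0 0 = (1 : R2) := rfl

/-- The weight function picking one representative out of each pair `{(m,n),(1-m,1-n)}`. -/
noncomputable def wF : ℤ × ℤ → ZMod 2 :=
  fun k => if 1 < k.1 + k.2 ∨ (k.1 + k.2 = 1 ∧ 1 ≤ k.1) then 1 else 0

/-- The parity functional `π`. -/
noncomputable def piF : R2 →ₗ[ZMod 2] ZMod 2 :=
  (Finsupp.linearCombination (ZMod 2) wF).comp
    (AddMonoidAlgebra.coeffLinearEquiv (ZMod 2)).toLinearMap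

lemma piF_single (k : ℤ × ℤ) (c : ZMod 2) :
    piF (AddMonoidAlgebra.single k c) = c * wF k := by
  show Finsupp.linearCombination (ZMod 2) wF (Finsupp.single k c) = c * wF k
  rw [Finsupp.linearCombination_single, smul_eq_mul]

lemma piF_E (m n : ℤ) : piF (mono m n + mono (1 - m) (1 - n)) = 1 := by
  rw [map_add]
  show piF (AddMonoidAlgebra.single (m, n) 1) +
    piF (AddMonoidAlgebra.single (1 - m, 1 - n) 1) = 1
  rw [piF_single, piF_single, one_mul, one_mul, wF, wF]
  by_cases h : 1 < m + n ∨ (m + n = 1 ∧ 1 ≤ m)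
  · rw [if_pos h, if_neg (by dsimp only; omega)]; ring
  · rw [if_neg h, if_pos (by dsimp only; omega)]; ring

lemma piF_shift (e : ℤ × ℤ) (p : R2) :
    piF (AddMonoidAlgebra.single e 1 * p) = p.coeff.sum (fun k c => c * wF (e + k)) := by
  induction p using AddMonoidAlgebra.induction_linear with
  | zero => simp
  | add f g hf hg =>
      rw [mul_add, map_add, hf, hg, AddMonoidAlgebra.coeff_add,
        Finsupp.sum_add_index (by intro k _; simp) (by intro k _ a b; ring)]
  | single k c =>
      rw [AddMonoidAlgebra.single_mul_single, one_mul]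
      rw [piF_single, AddMonoidAlgebra.coeff_single,
        Finsupp.sum_single_index (by simp)]

lemma piF_vanish (e : ℤ × ℤ) (σ : ℤ × ℤ → ℤ × ℤ) (hσσ : ∀ k, σ (σ k) = k)
    (hσne : ∀ k, σ k ≠ k)
    (hw : ∀ k, wF k + wF (e + k) = wF (σ k) + wF (e + σ k))
    (p : R2) (hp : ∀ k, p.coeff (σ k) = p.coeff k) :
    piF ((1 + AddMonoidAlgebra.single e 1) * p) = 0 := by
  have h1 : piF ((1 + AddMonoidAlgebra.single e 1) * p)
      = p.coeff.sum fun k c => c * (wF k + wF (e + k)) := by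
    rw [add_mul, one_mul, map_add, piF_shift]
    rw [show piF p = Finsupp.linearCombination (ZMod 2) wF p.coeff from rfl,
      Finsupp.linearCombination_apply]
    rw [← Finsupp.sum_add]
    apply Finsupp.sum_congr
    intro k _
    rw [smul_eq_mul]; ring
  rw [h1, Finsupp.sum]
  refine Finset.sum_involution (fun k _ => σ k) ?_ ?_ ?_ ?_
  · intro k hk
    rw [hp, hw]
    have : ∀ a : ZMod 2, a + a = 0 := by decide
    exact this _
  · intro k hk _; exact hσne k
  · intro k hk
    rw [Finsupp.mem_support_iff] at hk ⊢
    rw [hp]; exact hk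
  · intro k hk; exact hσσ k

/-- Coefficient symmetry from `p = mono a b * bar p`. -/
lemma coeff_symm (a b : ℤ) (p : R2) (h : p = mono a b * bar p) (k : ℤ × ℤ) :
    p.coeff ((a, b) - k) = p.coeff k := by
  conv_rhs => rw [h]
  rw [mono, AddMonoidAlgebra.coeff_single_mul_apply, bar_apply', one_mul]
  congr 1
  abel

/-- There is a well-defined `F₂`-linear functional `π` with `π(E_{m,n}) = 1` for all `m, n`
(so in particular `π(x^a y^b + x^{1-a} y^{1-b}) = 1`), such that for all `p = y·p̄` and
`q = x·q̄` the element `(1+x)p + (1+y)q` lies in `V` and has `π = 0`. -/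
theorem parity_functional_exists :
    ∃ π : R2 →ₗ[ZMod 2] ZMod 2,
      (∀ m n : ℤ, π (Emn m n) = 1) ∧
      (∀ a b : ℤ, π (mono a b + mono (1 - a) (1 - b)) = 1) ∧
      (∀ p q : R2, p = mono 0 1 * bar p → q = mono 1 0 * bar q →
        (1 + mono 1 0) * p + (1 + mono 0 1) * q ∈ Vset ∧
        π ((1 + mono 1 0) * p + (1 + mono 0 1) * q) = 0) := by
  refine ⟨piF, fun m n => piF_E m n, fun a b => piF_E a b, fun p q hp hq => ⟨?_, ?_⟩⟩
  · -- membership in Vset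
    show (1 + mono 1 0) * p + (1 + mono 0 1) * q
        = mono 1 0 * mono 0 1 * bar ((1 + mono 1 0) * p + (1 + mono 0 1) * q)
    rw [bar_add', bar_mul', bar_mul', bar_add', bar_add', bar_one', bar_mono', bar_mono']
    conv_lhs => rw [hp, hq]
    simp only [mul_add, add_mul, one_mul, mul_one, mono_mul', ← mul_assoc]
    norm_num
    abel
  · -- π vanishes
    rw [map_add]
    have hx : mono 1 0 = (AddMonoidAlgebra.single ((1 : ℤ), (0 : ℤ)) 1 : R2) := rfl
    have hy : mono 0 1 = (AddMonoidAlgebra.single ((0 : ℤ), (1 : ℤ)) 1 : R2) := rfl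
    have h1 : piF ((1 + mono 1 0) * p) = 0 := by
      rw [hx]
      refine piF_vanish _ (fun k => ((0, 1) : ℤ × ℤ) - k) (fun k => sub_sub_cancel _ _)
        (fun k => ?_) (fun k => ?_) p (coeff_symm 0 1 p hp)
      · intro hcon
        have h1 := congrArg Prod.snd hcon
        simp only [Prod.snd_sub] at h1
        omega
      · obtain ⟨m, n⟩ := k
        simp only [wF, Prod.mk_add_mk, Prod.mk_sub_mk]
        split_ifs <;> first | rfl | decide | (exfalso; omega)
    have h2 : piF ((1 + mono 0 1) * q) = 0 := by
      rw [hy]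
      refine piF_vanish _ (fun k => ((1, 0) : ℤ × ℤ) - k) (fun k => sub_sub_cancel _ _)
        (fun k => ?_) (fun k => ?_) q (coeff_symm 1 0 q hq)
      · intro hcon
        have h1 := congrArg Prod.fst hcon
        simp only [Prod.fst_sub] at h1
        omega
      · obtain ⟨m, n⟩ := k
        simp only [wF, Prod.mk_add_mk, Prod.mk_sub_mk]
        split_ifs <;> first | rfl | decide | (exfalso; omega)
    rw [h1, h2, add_zero]
end

section
/- Let R = F_2[x^{±1}, y^{±1}]. Every f ∈ R satisfying x·y·f̄ = f (bar denoting the antipode x ↦ x^{-1}, y ↦ y^{-1}) is a finite F_2-linear combination of the elements E_{m,n} = x^m y^n + x^{1-m} y^{1-n}. -/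
open AddMonoidAlgebra

lemma Emn_apply (m n : ℤ) (q : ℤ × ℤ) :
    (Emn m n).coeff q = (if (m, n) = q then (1 : ZMod 2) else 0) +
      (if (1 - m, 1 - n) = q then 1 else 0) := by
  classical
  simp only [Emn, mono, AddMonoidAlgebra.coeff_add, AddMonoidAlgebra.coeff_single]
  erw [Finsupp.add_apply, Finsupp.single_apply, Finsupp.single_apply]

lemma ne_conj (p : ℤ × ℤ) : ((1 : ℤ) - p.1, (1 : ℤ) - p.2) ≠ p := by
  intro h
  have h1 : (1 : ℤ) - p.1 = p.1 := congrArg Prod.fst h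
  omega

lemma key : ∀ (N : ℕ) (f : R2), f.coeff.support.card ≤ N →
    (∀ p : ℤ × ℤ, f.coeff p = f.coeff (((1 : ℤ), (1 : ℤ)) - p)) →
    f ∈ Submodule.span (ZMod 2) (Set.range fun mn : ℤ × ℤ => Emn mn.1 mn.2) := by
  intro N
  induction N with
  | zero =>
    intro f hcard _
    have : f = 0 := by
      rw [← AddMonoidAlgebra.coeff_eq_zero, ← Finsupp.support_eq_empty]
      exact Finset.card_eq_zero.mp (Nat.le_zero.mp hcard)
    simp [this]
  | succ n ih =>
    intro f hcard hsym
    rcases eq_or_ne f 0 with rfl | hne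
    · simp
    · obtain ⟨p, hp⟩ := Finsupp.support_nonempty_iff.mpr (mt AddMonoidAlgebra.coeff_eq_zero.mp hne)
      have hfp : f.coeff p = 1 := by
        have h2 := Finsupp.mem_support_iff.mp hp
        have h3 : ∀ a : ZMod 2, a ≠ 0 → a = 1 := by decide
        exact h3 _ h2
      set g : R2 := f + Emn p.1 p.2 with hg
      have hgval : ∀ q, g.coeff q = f.coeff q + (Emn p.1 p.2).coeff q := fun q => Finsupp.add_apply _ _ _
      have hE : ∀ q, (Emn p.1 p.2).coeff ((1, 1) - q) = (Emn p.1 p.2).coeff q := by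
        intro q
        rw [Emn_apply, Emn_apply]
        have h1 : ((p.1, p.2) = ((1:ℤ),(1:ℤ)) - q) ↔ ((1 - p.1, 1 - p.2) = q) := by
          simp only [Prod.ext_iff, Prod.fst_sub, Prod.snd_sub]
          constructor <;> (rintro ⟨a, b⟩; exact ⟨by omega, by omega⟩)
        have h2 : (((1:ℤ) - p.1, (1:ℤ) - p.2) = ((1:ℤ),(1:ℤ)) - q) ↔ ((p.1, p.2) = q) := by
          simp only [Prod.ext_iff, Prod.fst_sub, Prod.snd_sub]
          constructor <;> (rintro ⟨a, b⟩; exact ⟨by omega, by omega⟩)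
        rw [if_congr h1 rfl rfl, if_congr h2 rfl rfl, add_comm]
      have hgsym : ∀ q, g.coeff q = g.coeff (((1:ℤ),(1:ℤ)) - q) := by
        intro q; rw [hgval, hgval, hE, hsym]
      have hgsupp : g.coeff.support ⊆ f.coeff.support.erase p := by
        intro q hq
        have hq' : g.coeff q ≠ 0 := Finsupp.mem_support_iff.mp hq
        rw [hgval] at hq'
        rcases eq_or_ne q p with hqp | hqp
        · exfalso; apply hq'
          rw [hqp, Emn_apply, hfp]
          rw [if_pos (Prod.mk.eta), if_neg (ne_conj p)]
          decide
        · rcases eq_or_ne q ((1:ℤ) - p.1, (1:ℤ) - p.2) with hqc | hqc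
          · exfalso; apply hq'
            have hfc : f.coeff ((1:ℤ) - p.1, (1:ℤ) - p.2) = 1 := by
              have h5 := hsym p
              have h6 : (((1:ℤ),(1:ℤ)) - p) = ((1:ℤ) - p.1, (1:ℤ) - p.2) := by
                ext <;> simp
              rw [h6] at h5
              rw [← h5, hfp]
            rw [hqc, Emn_apply, hfc]
            have hne1 : (p.1, p.2) ≠ ((1:ℤ) - p.1, (1:ℤ) - p.2) := fun h => ne_conj p h.symm
            rw [if_neg hne1, if_pos rfl]
            decide
          · have hEq : (Emn p.1 p.2).coeff q = 0 := by
              rw [Emn_apply]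
              rw [if_neg, if_neg]
              · simp
              · exact fun h => hqc h.symm
              · exact fun h => hqp (by rw [← h])
            rw [Finset.mem_erase]
            refine ⟨hqp, Finsupp.mem_support_iff.mpr ?_⟩
            intro h0; apply hq'; rw [h0, hEq, add_zero]
      have hgcard : g.coeff.support.card ≤ n := by
        have := Finset.card_le_card hgsupp
        have h2 : (f.coeff.support.erase p).card < f.coeff.support.card := Finset.card_erase_lt_of_mem hp
        omega
      have hgmem := ih g hgcard hgsym
      have hEmem : Emn p.1 p.2 ∈ Submodule.span (ZMod 2)
          (Set.range fun mn : ℤ × ℤ => Emn mn.1 mn.2) :=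
        Submodule.subset_span ⟨p, rfl⟩
      have : f = g + Emn p.1 p.2 := by
        rw [hg, add_assoc]
        have : Emn p.1 p.2 + Emn p.1 p.2 = 0 := by
          ext q
          simp only [AddMonoidAlgebra.coeff_add, AddMonoidAlgebra.coeff_zero, Finsupp.add_apply, Finsupp.coe_zero, Pi.zero_apply]
          exact CharTwo.add_self_eq_zero _
        rw [this, add_zero]
      rw [this]
      exact Submodule.add_mem _ hgmem hEmem

/-- Every `f` with `x·y·f̄ = f` is a finite `F₂`-linear combination of the `E_{m,n}`. -/
theorem fixed_by_xy_antipode_mem_span (f : R2)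
    (hf : mono 1 0 * mono 0 1 * bar f = f) :
    f ∈ Submodule.span (ZMod 2) (Set.range fun mn : ℤ × ℤ => Emn mn.1 mn.2) := by
  have hsym : ∀ p : ℤ × ℤ, f.coeff p = f.coeff (((1:ℤ),(1:ℤ)) - p) := by
    intro p
    have h1 : mono 1 0 * mono 0 1 = AddMonoidAlgebra.single ((1:ℤ),(1:ℤ)) 1 := by
      rw [mono, mono, AddMonoidAlgebra.single_mul_single]
      norm_num
    have := congrArg (fun h : R2 => h.coeff p) hf
    simp only [h1] at this
    rw [AddMonoidAlgebra.coeff_single_mul_apply] at this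
    rw [← this, one_mul]
    show (bar f).coeff _ = _
    rw [bar, AddMonoidAlgebra.coeff_domCongr]
    congr 1
    show -(-((1:ℤ),(1:ℤ)) + p) = ((1:ℤ),(1:ℤ)) - p
    abel
  exact key f.coeff.support.card f le_rfl hsym
end

section
/- Let R = F_2[x^{±1}, y^{±1}] with antipode f ↦ f̄ (x ↦ x^{-1}, y ↦ y^{-1}), and let u = x^a y^b be any monomial. There is no 2×2 matrix C over R such that C = C† (antipode-transpose) and C·d = d̃·u^{-1}, where d = (1+x^{-1}, 1+y^{-1})^T and d̃ = (1+y, 1+x)^T. -/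
open AddMonoidAlgebra

/-- Antipode-transpose (`†`) of a matrix over `R2`. -/
noncomputable def dag {α β : Type*} (M : Matrix α β R2) : Matrix β α R2 :=
  (M.map bar).transpose

/-- The column vector `d = (1+x⁻¹, 1+y⁻¹)ᵀ`. -/
noncomputable def dcol : Matrix (Fin 2) (Fin 1) R2 :=
  !![1 + mono (-1) 0;
     1 + mono 0 (-1)]

/-- The column vector `d̃ = (1+y, 1+x)ᵀ`. -/
noncomputable def dtcol : Matrix (Fin 2) (Fin 1) R2 :=
  !![1 + mono 0 1;
     1 + mono 1 0]

/-! ### Auxiliary machinery: weighted coefficient-sum functionals -/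

/-- The `F₂`-valued functional `f ↦ ∑_v f(v)·w(v)` on `R2`, for a weight `w`. -/
noncomputable def W (w : ℤ × ℤ → ZMod 2) : R2 →+ ZMod 2 :=
  AddMonoidHom.mk' (fun f => Finsupp.sum f.coeff fun v c => c * w v)
    (fun f g => Finsupp.sum_add_index' (fun _ => zero_mul _) (fun _ c1 c2 => add_mul c1 c2 _))

lemma W_apply (w : ℤ × ℤ → ZMod 2) (f : R2) : W w f = Finsupp.sum f.coeff fun v c => c * w v := rfl

lemma W_single (w : ℤ × ℤ → ZMod 2) (v : ℤ × ℤ) (c : ZMod 2) :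
    W w (AddMonoidAlgebra.single v c) = c * w v := by
  rw [W_apply]
  exact Finsupp.sum_single_index (zero_mul _)

lemma W_mono (w : ℤ × ℤ → ZMod 2) (s t : ℤ) : W w (mono s t) = w (s, t) := by
  rw [mono, W_single, one_mul]

lemma W_shift (w : ℤ × ℤ → ZMod 2) (f : R2) (u : ℤ × ℤ) :
    W w (f * AddMonoidAlgebra.single u 1) = W (fun v => w (v + u)) f := by
  have h : f * AddMonoidAlgebra.single u 1
      = Finsupp.sum f.coeff fun v c => AddMonoidAlgebra.single (v + u) c := by
    rw [AddMonoidAlgebra.mul_def]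
    refine Finsupp.sum_congr fun v hv => ?_
    refine (Finsupp.sum_single_index ?_).trans (by rw [mul_one])
    rw [mul_zero]
    exact AddMonoidAlgebra.single_zero _
  rw [h]
  refine (map_finsuppSum (W w) f.coeff (fun v c => AddMonoidAlgebra.single (v + u) c)).trans ?_
  simp only [W_single]
  rfl

lemma W_bar (w : ℤ × ℤ → ZMod 2) (f : R2) : W w (bar f) = W (fun v => w (-v)) f := by
  have h : bar f = Finsupp.sum f.coeff fun v c => AddMonoidAlgebra.single (-v) c := by
    rw [bar]
    conv_lhs => rw [← AddMonoidAlgebra.sum_coeff_single f]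
    refine (map_finsuppSum (AddMonoidAlgebra.domCongr (ZMod 2) (ZMod 2)
      (AddEquiv.neg (ℤ × ℤ))) f.coeff (fun v c => AddMonoidAlgebra.single v c)).trans ?_
    refine Finsupp.sum_congr fun v hv => ?_
    exact AddMonoidAlgebra.domCongr_single _ _ _
  rw [h]
  refine (map_finsuppSum (W w) f.coeff (fun v c => AddMonoidAlgebra.single (-v) c)).trans ?_
  simp only [W_single]
  rfl

lemma W_weight_add (w1 w2 : ℤ × ℤ → ZMod 2) (f : R2) :
    W (fun v => w1 v + w2 v) f = W w1 f + W w2 f := by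
  rw [W_apply, W_apply, W_apply, ← Finsupp.sum_add]
  exact Finsupp.sum_congr fun v hv => mul_add _ _ _

lemma W_congr (w1 w2 : ℤ × ℤ → ZMod 2) (f : R2) (h : ∀ v, w1 v = w2 v) :
    W w1 f = W w2 f := by rw [funext h]

/-! ### Integer triangular numbers mod 2 -/

/-- Triangular numbers `q n = n(n+1)/2`. -/
def q (n : ℤ) : ℤ := n * (n + 1) / 2

lemma two_q (n : ℤ) : 2 * q n = n * (n + 1) :=
  Int.mul_ediv_cancel' (Int.even_mul_succ_self n).two_dvd

lemma q_succ (n : ℤ) : q (n + 1) = q n + (n + 1) := by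
  have h1 := two_q n
  have h2 := two_q (n + 1)
  have h3 : (n + 1) * (n + 1 + 1) = n * (n + 1) + 2 * (n + 1) := by ring
  linarith

lemma q_pred (n : ℤ) : q (n + -1) = q n - n := by
  have h := q_succ (n + -1)
  norm_num at h
  linarith

lemma q_neg (n : ℤ) : q (-n) = q n - n := by
  have h1 := two_q n
  have h2 := two_q (-n)
  have h3 : (-n) * (-n + 1) = n * (n + 1) - 2 * n := by ring
  linarith

/-! ### The weights -/

/-- weight `v ↦ v₁ mod 2` -/
noncomputable def wl : ℤ × ℤ → ZMod 2 := fun v => (v.1 : ZMod 2)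
/-- weight `v ↦ v₂ mod 2` -/
noncomputable def wm : ℤ × ℤ → ZMod 2 := fun v => (v.2 : ZMod 2)
/-- weight `v ↦ v₁v₂ mod 2` -/
noncomputable def wn : ℤ × ℤ → ZMod 2 := fun v => ((v.1 * v.2 : ℤ) : ZMod 2)
/-- weight `v ↦ binom(v₁+1,2) mod 2` -/
noncomputable def wq : ℤ × ℤ → ZMod 2 := fun v => ((q v.1 : ℤ) : ZMod 2)
/-- weight `v ↦ binom(v₂+1,2) mod 2` -/
noncomputable def wp : ℤ × ℤ → ZMod 2 := fun v => ((q v.2 : ℤ) : ZMod 2)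

lemma wq_shift1 (v : ℤ × ℤ) : wq (v + ((-1 : ℤ), (0 : ℤ))) = wq v + wl v := by
  simp only [wq, wl, Prod.fst_add]
  rw [q_pred, Int.cast_sub, CharTwo.sub_eq_add]

lemma wq_shift2 (v : ℤ × ℤ) : wq (v + ((0 : ℤ), (-1 : ℤ))) = wq v := by
  simp only [wq, Prod.fst_add, add_zero]

lemma wp_neg (v : ℤ × ℤ) : wp (-v) = wp v + wm v := by
  simp only [wp, wm, Prod.snd_neg]
  rw [q_neg, Int.cast_sub, CharTwo.sub_eq_add]

lemma wl_neg (v : ℤ × ℤ) : wl (-v) = wl v := by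
  simp only [wl, Prod.fst_neg, Int.cast_neg, CharTwo.neg_eq]

lemma wn_shift1 (v : ℤ × ℤ) : wn (v + ((-1 : ℤ), (0 : ℤ))) = wn v + wm v := by
  simp only [wn, wm, Prod.fst_add, Prod.snd_add, add_zero]
  rw [show (v.1 + -1) * v.2 = v.1 * v.2 - v.2 by ring, Int.cast_sub, CharTwo.sub_eq_add]

lemma wn_shift2 (v : ℤ × ℤ) : wn (v + ((0 : ℤ), (-1 : ℤ))) = wn v + wl v := by
  simp only [wn, wl, Prod.fst_add, Prod.snd_add, add_zero]
  rw [show v.1 * (v.2 + -1) = v.1 * v.2 - v.1 by ring, Int.cast_sub, CharTwo.sub_eq_add]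

/-- No Hermitian (`C = C†`) solution of `C·d = d̃·u⁻¹` exists, for any monomial `u = x^a y^b`. -/
theorem no_hermitian_C (a b : ℤ) :
    ¬ ∃ C : Matrix (Fin 2) (Fin 2) R2,
        C = dag C ∧ C * dcol = mono (-a) (-b) • dtcol := by
  rintro ⟨C, hH, hE⟩
  have h2 : (2 : ZMod 2) = 0 := rfl
  -- the two scalar equations
  have e1 : C 0 0 + C 0 0 * AddMonoidAlgebra.single ((-1 : ℤ), (0 : ℤ)) 1
      + (C 0 1 + C 0 1 * AddMonoidAlgebra.single ((0 : ℤ), (-1 : ℤ)) 1)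
      = mono (-a) (-b) + mono (-a) (-b) * AddMonoidAlgebra.single ((0 : ℤ), (1 : ℤ)) 1 := by
    have h : C 0 0 * (1 + mono (-1) 0) + C 0 1 * (1 + mono 0 (-1))
        = mono (-a) (-b) * (1 + mono 0 1) := by
      have h0 := congrFun (congrFun hE 0) 0
      simpa [Matrix.mul_apply, Fin.sum_univ_two, dcol, dtcol, smul_eq_mul] using h0
    rw [show mono (-1) 0 = AddMonoidAlgebra.single ((-1 : ℤ), (0 : ℤ)) 1 from rfl,
      show mono 0 (-1) = AddMonoidAlgebra.single ((0 : ℤ), (-1 : ℤ)) 1 from rfl,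
      show mono 0 1 = AddMonoidAlgebra.single ((0 : ℤ), (1 : ℤ)) 1 from rfl] at h
    linear_combination h
  have e2 : C 1 0 + C 1 0 * AddMonoidAlgebra.single ((-1 : ℤ), (0 : ℤ)) 1
      + (C 1 1 + C 1 1 * AddMonoidAlgebra.single ((0 : ℤ), (-1 : ℤ)) 1)
      = mono (-a) (-b) + mono (-a) (-b) * AddMonoidAlgebra.single ((1 : ℤ), (0 : ℤ)) 1 := by
    have h : C 1 0 * (1 + mono (-1) 0) + C 1 1 * (1 + mono 0 (-1))
        = mono (-a) (-b) * (1 + mono 1 0) := by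
      have h0 := congrFun (congrFun hE 1) 0
      simpa [Matrix.mul_apply, Fin.sum_univ_two, dcol, dtcol, smul_eq_mul] using h0
    rw [show mono (-1) 0 = AddMonoidAlgebra.single ((-1 : ℤ), (0 : ℤ)) 1 from rfl,
      show mono 0 (-1) = AddMonoidAlgebra.single ((0 : ℤ), (-1 : ℤ)) 1 from rfl,
      show mono 1 0 = AddMonoidAlgebra.single ((1 : ℤ), (0 : ℤ)) 1 from rfl] at h
    linear_combination h
  -- hermiticity
  have hA : C 0 0 = bar (C 0 0) := by
    have h := congrFun (congrFun hH 0) 0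
    simpa [dag, Matrix.transpose_apply, Matrix.map_apply] using h
  have hB : C 0 1 = bar (C 1 0) := by
    have h := congrFun (congrFun hH 0) 1
    simpa [dag, Matrix.transpose_apply, Matrix.map_apply] using h
  -- Step 1: apply W wq to e2, obtaining `W wl (C 1 0) = 1 + a`
  have s1 : W wl (C 1 0) = 1 + (a : ZMod 2) := by
    have h := congrArg (W wq) e2
    rw [map_add, map_add, map_add, map_add, W_shift, W_shift, W_shift,
      W_congr _ _ _ wq_shift1, W_congr _ _ _ wq_shift2, W_weight_add,
      W_mono, W_mono] at h
    rw [show ((-a, -b) : ℤ × ℤ) + (1, 0) = (-a + 1, -b) by simp] at h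
    have rhs1 : wq (-a, -b) + wq (-a + 1, -b) = 1 + (a : ZMod 2) := by
      rw [show wq (-a, -b) = ((q (-a) : ℤ) : ZMod 2) from rfl,
        show wq (-a + 1, -b) = ((q (-a + 1) : ℤ) : ZMod 2) from rfl, q_succ (-a)]
      push_cast
      linear_combination (((q (-a) : ℤ) : ZMod 2) - (a : ZMod 2)) * h2
    rw [rhs1] at h
    linear_combination h - (W wq (C 1 0)) * h2 - (W wq (C 1 1)) * h2
  -- Step 2: transfer to `C 0 1`
  have s2 : W wl (C 0 1) = 1 + (a : ZMod 2) := by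
    rw [hB, W_bar, W_congr _ _ _ wl_neg, s1]
  -- Step 3: `W wm (C 0 0) = 0` from hermiticity of the diagonal entry
  have s3 : W wm (C 0 0) = 0 := by
    have h : W wp (C 0 0) = W wp (C 0 0) + W wm (C 0 0) := by
      conv_lhs => rw [hA]
      rw [W_bar, W_congr _ _ _ wp_neg, W_weight_add]
    linear_combination -h
  -- Step 4: apply W wn to e1 and derive the contradiction
  have s4 : W wm (C 0 0) + W wl (C 0 1) = (a : ZMod 2) := by
    have h := congrArg (W wn) e1
    rw [map_add, map_add, map_add, map_add, W_shift, W_shift, W_shift,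
      W_congr _ _ _ wn_shift1, W_congr _ _ _ wn_shift2, W_weight_add, W_weight_add,
      W_mono, W_mono] at h
    rw [show ((-a, -b) : ℤ × ℤ) + (0, 1) = (-a, -b + 1) by simp] at h
    have rhs4 : wn (-a, -b) + wn (-a, -b + 1) = (a : ZMod 2) := by
      rw [show wn (-a, -b) = (((-a) * (-b) : ℤ) : ZMod 2) from rfl,
        show wn (-a, -b + 1) = (((-a) * (-b + 1) : ℤ) : ZMod 2) from rfl]
      push_cast
      linear_combination ((a : ZMod 2) * (b : ZMod 2) - (a : ZMod 2)) * h2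
    rw [rhs4] at h
    linear_combination h - (W wn (C 0 0)) * h2 - (W wn (C 0 1)) * h2
  rw [s3, s2, zero_add] at s4
  have : (1 : ZMod 2) = 0 := by linear_combination s4
  exact one_ne_zero this
end

section
/- Let R = F_2[x^{±1}, y^{±1}] with antipode f ↦ f̄, let Λ = [[0,I_2],[I_2,0]], let σ be the toric-code stabilizer matrix with columns (1+x^{-1}, 1+y^{-1}, 0, 0)^T and (0, 0, 1+y, 1+x)^T, and let u = x^a y^b be any monomial with S_u = [[0, u],[u^{-1}, 0]]. Then there exists no 4×4 matrix Q over R satisfying simultaneously Q†ΛQ = Λ, Q^2 = I_4, and Q·σ = σ·S_u. -/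
open AddMonoidAlgebra

/-- The toric-code stabilizer matrix `σ` (columns: vertex and plaquette stabilizers). -/
noncomputable def sigmaTC : Matrix (Fin 4) (Fin 2) R2 :=
  !![1 + mono (-1) 0, 0;
     1 + mono 0 (-1), 0;
     0, 1 + mono 0 1;
     0, 1 + mono 1 0]

/-- The symplectic form `Λ = [[0, I₂], [I₂, 0]]`. -/
noncomputable def Lam : Matrix (Fin 4) (Fin 4) R2 :=
  !![0, 0, 1, 0;
     0, 0, 0, 1;
     1, 0, 0, 0;
     0, 1, 0, 0]

namespace NoZ2

lemma bar_add (f g : R2) : bar (f + g) = bar f + bar g := by simp [bar]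

lemma bar_single (m : ℤ × ℤ) (c : ZMod 2) :
    bar (AddMonoidAlgebra.single m c) = AddMonoidAlgebra.single (-m) c := by
  simp [bar]

lemma bar_bar (f : R2) : bar (bar f) = f := by
  induction f using AddMonoidAlgebra.induction_linear with
  | zero => simp [bar]
  | add f g hf hg => rw [bar_add, bar_add, hf, hg]
  | single m c => rw [bar_single, bar_single, neg_neg]

lemma bar_mul (f g : R2) : bar (f * g) = bar f * bar g := by simp [bar]

lemma bar_one : bar (1 : R2) = 1 := by simp [bar]

lemma bar_mono (s t : ℤ) : bar (mono s t) = mono (-s) (-t) := by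
  rw [mono, bar_single]; rfl

lemma mono_mul (s t s' t' : ℤ) : mono s t * mono s' t' = mono (s + s') (t + t') := by
  simp [mono, AddMonoidAlgebra.single_mul_single]

lemma mono_zero : mono 0 0 = (1 : R2) := by
  simp [mono, AddMonoidAlgebra.one_def]; rfl

lemma R2_add_self (f : R2) : f + f = 0 := by
  rw [← two_smul (ZMod 2) f, show (2 : ZMod 2) = 0 from rfl, zero_smul]

noncomputable def phi (χ : ℤ × ℤ → ZMod 2) (f : R2) : ZMod 2 :=
  Finsupp.sum f.coeff fun m c => χ m * c

lemma phi_zero (χ : ℤ × ℤ → ZMod 2) : phi χ (0 : R2) = 0 := by simp [phi]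

lemma phi_add (χ : ℤ × ℤ → ZMod 2) (f g : R2) :
    phi χ (f + g) = phi χ f + phi χ g := by
  classical
  unfold phi; rw [AddMonoidAlgebra.coeff_add]
  exact Finsupp.sum_add_index' (fun m => by simp) (fun m c₁ c₂ => by simp [mul_add])

lemma phi_single (χ : ℤ × ℤ → ZMod 2) (m : ℤ × ℤ) (c : ZMod 2) :
    phi χ (AddMonoidAlgebra.single m c) = χ m * c := by
  classical
  unfold phi; rw [AddMonoidAlgebra.coeff_single]
  exact Finsupp.sum_single_index (by simp)

lemma phi_mul_mono (χ : ℤ × ℤ → ZMod 2) (s t : ℤ) (f : R2) :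
    phi χ (f * mono s t) = phi (fun m => χ (m + (s, t))) f := by
  induction f using AddMonoidAlgebra.induction_linear with
  | zero => rw [zero_mul, phi_zero, phi_zero]
  | add f g hf hg => rw [add_mul, phi_add, phi_add, hf, hg]
  | single m c =>
      rw [mono, AddMonoidAlgebra.single_mul_single, mul_one, phi_single, phi_single]

lemma phi_bar (χ : ℤ × ℤ → ZMod 2) (f : R2) :
    phi χ (bar f) = phi (fun m => χ (-m)) f := by
  induction f using AddMonoidAlgebra.induction_linear with
  | zero => rw [show bar 0 = 0 by simp [bar], phi_zero, phi_zero]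
  | add f g hf hg => rw [bar_add, phi_add, phi_add, hf, hg]
  | single m c => rw [bar_single, phi_single, phi_single]

lemma phi_funadd (χ χ' : ℤ × ℤ → ZMod 2) (f : R2) :
    phi χ f + phi χ' f = phi (fun m => χ m + χ' m) f := by
  classical
  simp [phi, ← Finsupp.sum_add, add_mul]

lemma phi_ext {χ χ' : ℤ × ℤ → ZMod 2} (h : ∀ m, χ m = χ' m) (f : R2) :
    phi χ f = phi χ' f := by
  simp [phi]; congr 1; funext m c; rw [h]

lemma phi_zero_fun (f : R2) : phi (fun _ => (0 : ZMod 2)) f = 0 := by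
  simp [phi]

def chiS (m : ℤ × ℤ) : ZMod 2 := if m.1 % 2 = 1 ∧ m.2 % 2 = 1 ∧ 1 ≤ m.2 then 1 else 0
def chi0 (m : ℤ × ℤ) : ZMod 2 := if m.1 % 2 = 1 ∧ m.2 = 0 then 1 else 0
def psi (m : ℤ × ℤ) : ZMod 2 := if m.1 % 2 = 1 ∧ m.2 = 0 ∧ 1 ≤ m.1 then 1 else 0
def pv (j : ℤ) : ZMod 2 := if j % 2 = 1 ∧ 1 ≤ j then 1 else 0

lemma chiS_vert (m : ℤ × ℤ) : chiS (m + (0, 1)) + chiS (m + (0, -1)) = chi0 m := by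
  obtain ⟨i, j⟩ := m
  simp only [chiS, chi0, Prod.mk_add_mk, add_zero]
  split_ifs <;> first | decide | omega

lemma chiS_horiz (m : ℤ × ℤ) : chiS (m + (1, 0)) + chiS (m + (-1, 0)) = 0 := by
  obtain ⟨i, j⟩ := m
  simp only [chiS, Prod.mk_add_mk, add_zero]
  split_ifs <;> first | decide | omega

lemma chi0_split (m : ℤ × ℤ) : chi0 m = psi m + psi (-m) := by
  obtain ⟨i, j⟩ := m
  simp only [chi0, psi, Prod.neg_mk]
  split_ifs <;> first | decide | omega

lemma pair1 (i j : ℤ) : chiS (i, j) + chiS (-1 + i, j) = pv j := by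
  simp only [chiS, pv]
  split_ifs <;> first | decide | omega

lemma pair2 (i j : ℤ) : chiS (i, j) + chiS (1 + i, j) = pv j := by
  simp only [chiS, pv]
  split_ifs <;> first | decide | omega

lemma pv_sum (b : ℤ) : pv b + pv (-1 + b) + (pv (-b) + pv (1 + -b)) = 1 := by
  simp only [pv]
  split_ifs <;> first | decide | omega

lemma key_sum (a b : ℤ) :
    (chiS ((0, 0) + (a, b)) + chiS ((-1, 0) + (a, b)) +
      (chiS ((0, -1) + (a, b)) + chiS ((-1, -1) + (a, b)))) +
    (chiS ((0, 0) + (-a, -b)) + chiS ((1, 0) + (-a, -b)) +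
      (chiS ((0, 1) + (-a, -b)) + chiS ((1, 1) + (-a, -b)))) = 1 := by
  simp only [Prod.mk_add_mk, add_zero, zero_add]
  rw [pair1 a b, pair1 a (-1 + b), pair2 (-a) (-b), pair2 (-a) (1 + -b)]
  exact pv_sum b

end NoZ2

open NoZ2

/-- Main theorem, `l = 1` case: there is no strictly translation-invariant Clifford
`ℤ₂` symmetry exchanging the electric and magnetic stabilizers of the toric code. -/
theorem no_Z2_clifford_em_duality (a b : ℤ) :
    ¬ ∃ Q : Matrix (Fin 4) (Fin 4) R2,
        dag Q * Lam * Q = Lam ∧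
        Q * Q = 1 ∧
        Q * sigmaTC = sigmaTC * !![0, mono a b; mono (-a) (-b), 0] := by
  rintro ⟨Q, hL, hQ2, hS⟩
  have hQL : dag Q * Lam = Lam * Q := by
    calc dag Q * Lam = dag Q * Lam * (Q * Q) := by rw [hQ2, mul_one]
    _ = (dag Q * Lam * Q) * Q := (mul_assoc _ _ _).symm
    _ = Lam * Q := by rw [hL]
  have hb : bar (Q 0 2) = Q 0 2 := by
    have := congrFun (congrFun hQL 2) 2
    simpa [Matrix.mul_apply, Fin.sum_univ_four, Lam, dag, Matrix.vecHead,
      Matrix.vecTail] using this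
  have hd : bar (Q 1 3) = Q 1 3 := by
    have := congrFun (congrFun hQL 3) 3
    simpa [Matrix.mul_apply, Fin.sum_univ_four, Lam, dag, Matrix.vecHead,
      Matrix.vecTail] using this
  have hc : bar (Q 1 2) = Q 0 3 := by
    have := congrFun (congrFun hQL 2) 3
    simpa [Matrix.mul_apply, Fin.sum_univ_four, Lam, dag, Matrix.vecHead,
      Matrix.vecTail] using this
  have E1 : Q 0 2 * (1 + mono 0 1) + Q 0 3 * (1 + mono 1 0)
      = (1 + mono (-1) 0) * mono a b := by
    have := congrFun (congrFun hS 0) 1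
    simpa [Matrix.mul_apply, Fin.sum_univ_four, Fin.sum_univ_two, sigmaTC] using this
  have E2 : Q 1 2 * (1 + mono 0 1) + Q 1 3 * (1 + mono 1 0)
      = (1 + mono 0 (-1)) * mono a b := by
    have := congrFun (congrFun hS 1) 1
    simpa [Matrix.mul_apply, Fin.sum_univ_four, Fin.sum_univ_two, sigmaTC] using this
  -- bar of E2
  have E2b : Q 0 3 * (1 + mono 0 (-1)) + Q 1 3 * (1 + mono (-1) 0)
      = (1 + mono 0 1) * mono (-a) (-b) := by
    have h := congrArg bar E2
    simpa [bar_add, bar_mul, bar_one, bar_mono, hc, hd] using h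
  set B := Q 0 2 with hBdef
  set C := Q 0 3 with hCdef
  set D := Q 1 3 with hDdef
  have hYY : mono 0 1 * mono 0 (-1) = (1 : R2) := by
    rw [mono_mul]; norm_num; exact mono_zero
  have hXX : mono (-1) 0 * mono 1 0 = (1 : R2) := by
    rw [mono_mul]; norm_num; exact mono_zero
  -- multiplied equations
  have e1' : (B * (1 + mono 0 1)) * (1 + mono 0 (-1))
        + (C * (1 + mono 1 0)) * (1 + mono 0 (-1))
      = ((1 + mono (-1) 0) * mono a b) * (1 + mono 0 (-1)) := by
    rw [← add_mul, E1]
  have e2' : (C * (1 + mono 0 (-1))) * (1 + mono 1 0)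
        + (D * (1 + mono (-1) 0)) * (1 + mono 1 0)
      = ((1 + mono 0 1) * mono (-a) (-b)) * (1 + mono 1 0) := by
    rw [← add_mul, E2b]
  -- the b-part vanishes under phi chiS
  have hchi0 : phi chi0 B = 0 := by
    rw [phi_ext chi0_split, ← phi_funadd, ← phi_bar, hb,
      CharTwo.add_self_eq_zero]
  have hbpart : phi chiS ((B * (1 + mono 0 1)) * (1 + mono 0 (-1))) = 0 := by
    have hid : (B * (1 + mono 0 1)) * (1 + mono 0 (-1))
        = B * mono 0 1 + B * mono 0 (-1) + (B + B) := by
      linear_combination B * hYY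
    rw [hid, R2_add_self, add_zero, phi_add, phi_mul_mono, phi_mul_mono,
      phi_funadd, phi_ext chiS_vert, hchi0]
  -- the d-part vanishes under phi chiS
  have hdpart : phi chiS ((D * (1 + mono (-1) 0)) * (1 + mono 1 0)) = 0 := by
    have hid : (D * (1 + mono (-1) 0)) * (1 + mono 1 0)
        = D * mono 1 0 + D * mono (-1) 0 + (D + D) := by
      linear_combination D * hXX
    rw [hid, R2_add_self, add_zero, phi_add, phi_mul_mono, phi_mul_mono,
      phi_funadd, phi_ext chiS_horiz, phi_zero_fun]
  -- RHS values
  have hprod1 : (1 + mono (-1) 0) * (1 + mono 0 (-1))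
      = mono 0 0 + mono (-1) 0 + (mono 0 (-1) + mono (-1) (-1)) := by
    rw [show mono (-1) (-1) = mono (-1) 0 * mono 0 (-1) from by rw [mono_mul]; norm_num,
      mono_zero]
    ring
  have hprod2 : (1 + mono 0 1) * (1 + mono 1 0)
      = mono 0 0 + mono 1 0 + (mono 0 1 + mono 1 1) := by
    rw [show mono 1 1 = mono 0 1 * mono 1 0 from by rw [mono_mul]; norm_num,
      mono_zero]
    ring
  have hR1 : phi chiS (((1 + mono (-1) 0) * mono a b) * (1 + mono 0 (-1)))
      = chiS ((0, 0) + (a, b)) + chiS ((-1, 0) + (a, b)) +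
        (chiS ((0, -1) + (a, b)) + chiS ((-1, -1) + (a, b))) := by
    rw [show ((1 + mono (-1) 0) * mono a b) * (1 + mono 0 (-1))
        = ((1 + mono (-1) 0) * (1 + mono 0 (-1))) * mono a b from by ring,
      phi_mul_mono, hprod1, phi_add, phi_add, phi_add]
    simp only [mono, phi_single, mul_one]
  have hR2 : phi chiS (((1 + mono 0 1) * mono (-a) (-b)) * (1 + mono 1 0))
      = chiS ((0, 0) + (-a, -b)) + chiS ((1, 0) + (-a, -b)) +
        (chiS ((0, 1) + (-a, -b)) + chiS ((1, 1) + (-a, -b))) := by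
    rw [show ((1 + mono 0 1) * mono (-a) (-b)) * (1 + mono 1 0)
        = ((1 + mono 0 1) * (1 + mono 1 0)) * mono (-a) (-b) from by ring,
      phi_mul_mono, hprod2, phi_add, phi_add, phi_add]
    simp only [mono, phi_single, mul_one]
  -- assemble
  have S1 := congrArg (phi chiS) e1'
  rw [phi_add, hbpart, zero_add] at S1
  have S2 := congrArg (phi chiS) e2'
  rw [phi_add, hdpart, add_zero] at S2
  have hcc : (C * (1 + mono 1 0)) * (1 + mono 0 (-1))
      = (C * (1 + mono 0 (-1))) * (1 + mono 1 0) := by ring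
  have hfinal : (1 : ZMod 2) = 0 := by
    rw [← key_sum a b, ← hR1, ← hR2, ← S1, ← S2, hcc, CharTwo.add_self_eq_zero]
  exact one_ne_zero hfinal
end
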